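/- Let e_j : [0,T] → ℝ², j = 1,…,J (with periodic indexing e_0 = e_J), and let τ_j, τ^h_j : [0,T] → ℝ² be differentiable with δx^h_j = q^h_j τ^h_j, |τ_j| = |τ^h_j| = 1, e_j = x_j − x^h_j, δe_j = q_j(τ_j − τ^h_j) + (q_j − q^h_j)τ^h_j where δx_j = q_j τ_j. Then the summation-by-parts identity holds: −h Σ_{j=1}^J [(τ_{j+1}−τ^h_{j+1})−(τ_j−τ^h_j)]/h · ė_j = (1/2) h d/dt Σ_{j=1}^J q^h_j |τ_j − τ^h_j|² + h Σ_{j=1}^J [ ((q_j−q^h_j)/q_j) δẋ_j·(τ_j−τ^h_j) + (1/2)(q^h_j/q_j)(δẋ_j·τ_j)|τ_j−τ^h_j|² ]. -/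

import Mathlib

open scoped RealInnerProductSpace
open Set

noncomputable section

abbrev E2 := EuclideanSpace ℝ (Fin 2)

/-- Clockwise rotation through π/2. -/
def rot (v : E2) : E2 := (WithLp.equiv 2 (Fin 2 → ℝ)).symm ![v 1, -v 0]

section SbpAux

lemma sbp_icc_insert (b : ℤ) :
    Finset.Icc (1:ℤ) (b+1) = insert (b+1) (Finset.Icc 1 b) ∨ (b + 1 < 1) := by
  by_cases h : (1:ℤ) ≤ b + 1
  · left; ext k; simp only [Finset.mem_Icc, Finset.mem_insert]; omega
  · right; omega

lemma sbp_tele (F : ℤ → ℝ) : ∀ n : ℕ,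
    ∑ j ∈ Finset.Icc (1:ℤ) (n:ℤ), (F (j+1) - F j) = F ((n:ℤ)+1) - F 1 := by
  intro n
  induction n with
  | zero => simp
  | succ n ih =>
      have hc : ((n+1:ℕ):ℤ) = (n:ℤ)+1 := by push_cast; ring
      have hins : Finset.Icc (1:ℤ) ((n:ℤ)+1) = insert ((n:ℤ)+1) (Finset.Icc 1 (n:ℤ)) := by
        rcases sbp_icc_insert (n:ℤ) with h | h
        · exact h
        · omega
      rw [hc, hins, Finset.sum_insert (by simp), ih]
      ring

lemma sbp_sum_shift_one (J : ℕ) (F : ℤ → ℝ) (hF : F ((J:ℤ) + 1) = F 1) :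
    ∑ j ∈ Finset.Icc (1:ℤ) (J:ℤ), F (j+1) = ∑ j ∈ Finset.Icc (1:ℤ) (J:ℤ), F j := by
  have h := sbp_tele F J
  rw [Finset.sum_sub_distrib] at h
  rw [hF] at h
  linarith

lemma sbp_hasDerivAt_norm (u : ℝ → E2) (ud : E2) (t : ℝ)
    (hu : HasDerivAt u ud t) (h0 : u t ≠ 0) :
    HasDerivAt (fun s => ‖u s‖) (⟪ud, u t⟫ / ‖u t‖) t := by
  have h1 : HasDerivAt (fun s => ⟪u s, u s⟫) (⟪u t, ud⟫ + ⟪ud, u t⟫) t := hu.inner ℝ hu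
  have hne : ⟪u t, u t⟫ ≠ 0 := inner_self_ne_zero.mpr h0
  have h2 := h1.sqrt hne
  have heq : (fun s => Real.sqrt ⟪u s, u s⟫) = fun s => ‖u s‖ := by
    funext s
    rw [real_inner_self_eq_norm_sq, Real.sqrt_sq (norm_nonneg _)]
  rw [heq] at h2
  convert h2 using 1
  have hnn : ‖u t‖ ≠ 0 := norm_ne_zero_iff.mpr h0
  rw [real_inner_comm (u t) ud, real_inner_self_eq_norm_sq, Real.sqrt_sq (norm_nonneg _)]
  field_simp
  ring

lemma sbp_pointwise (Q Qh : ℝ) (hQ : Q ≠ 0) (hQh : Qh ≠ 0) (a b ud uhd : E2)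
    (ha : ⟪a,a⟫ = 1) (hb : ⟪b,b⟫ = 1) :
    ⟪a - b, ud - uhd⟫ -
      (((Q - Qh)/Q) * ⟪ud, a - b⟫ + (1/2)*(Qh/Q)*⟪ud, a⟫*‖a-b‖^2)
    = (1/2)*( ⟪uhd, b⟫*‖a-b‖^2
        + Qh * (2*⟪(Q⁻¹ • (ud - ⟪ud,a⟫ • a)) - (Qh⁻¹ • (uhd - ⟪uhd,b⟫ • b)), a-b⟫)) := by
  have hn : ‖a-b‖^2 = ⟪a-b, a-b⟫ := (real_inner_self_eq_norm_sq _).symm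
  rw [hn]
  simp only [inner_sub_left, inner_sub_right, real_inner_smul_left, real_inner_smul_right]
  rw [real_inner_comm b a, real_inner_comm ud a, real_inner_comm ud b,
    real_inner_comm uhd a, real_inner_comm uhd b]
  rw [ha, hb]
  field_simp
  ring

/-- derivative of a single summand, stated in the final desired form. -/
lemma sbp_summand_deriv (t : ℝ) (u uh : ℝ → E2) (ud uhd : E2)
    (hu : HasDerivAt u ud t) (huh : HasDerivAt uh uhd t)
    (q qh : ℝ → ℝ) (hq : ∀ s, q s = ‖u s‖) (hqh : ∀ s, qh s = ‖uh s‖)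
    (hq0 : 0 < q t) (hqh0 : 0 < qh t)
    (τ τh : ℝ → E2) (hτ : ∀ s, τ s = (q s)⁻¹ • u s) (hτh : ∀ s, τh s = (qh s)⁻¹ • uh s) :
    HasDerivAt (fun s => qh s * ‖τ s - τh s‖^2)
      (2 * (⟪τ t - τh t, ud - uhd⟫ -
        (((q t - qh t)/q t) * ⟪ud, τ t - τh t⟫
          + (1/2)*(qh t/q t)*⟪ud, τ t⟫*‖τ t - τh t‖^2))) t := by
  have hq0' : q t ≠ 0 := ne_of_gt hq0
  have hqh0' : qh t ≠ 0 := ne_of_gt hqh0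
  have hu0 : u t ≠ 0 := by
    intro h; rw [hq t, h, norm_zero] at hq0; exact lt_irrefl 0 hq0
  have huh0 : uh t ≠ 0 := by
    intro h; rw [hqh t, h, norm_zero] at hqh0; exact lt_irrefl 0 hqh0
  have hqfun : q = fun s => ‖u s‖ := funext hq
  have hqhfun : qh = fun s => ‖uh s‖ := funext hqh
  have hqd : HasDerivAt q (⟪ud, τ t⟫) t := by
    rw [hqfun]
    convert sbp_hasDerivAt_norm u ud t hu hu0 using 1
    rw [hτ t, real_inner_smul_right, hq t]
    field_simp
  have hqhd : HasDerivAt qh (⟪uhd, τh t⟫) t := by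
    rw [hqhfun]
    convert sbp_hasDerivAt_norm uh uhd t huh huh0 using 1
    rw [hτh t, real_inner_smul_right, hqh t]
    field_simp
  have hut : u t = q t • τ t := by
    rw [hτ t, smul_inv_smul₀ hq0']
  have huht : uh t = qh t • τh t := by
    rw [hτh t, smul_inv_smul₀ hqh0']
  have hτd : HasDerivAt τ ((q t)⁻¹ • (ud - ⟪ud, τ t⟫ • τ t)) t := by
    have h3 := (hqd.inv hq0').smul hu
    have heq : (fun s => (q s)⁻¹ • u s) = τ := (funext hτ).symm
    change HasDerivAt (fun s => (q s)⁻¹ • u s) ((q t)⁻¹ • ud + (-⟪ud, τ t⟫ / q t ^ 2) • u t) t at h3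
    rw [heq] at h3
    convert h3 using 1
    rw [hut]
    match_scalars
    · field_simp
    · field_simp
  have hτhd : HasDerivAt τh ((qh t)⁻¹ • (uhd - ⟪uhd, τh t⟫ • τh t)) t := by
    have h3 := (hqhd.inv hqh0').smul huh
    have heq : (fun s => (qh s)⁻¹ • uh s) = τh := (funext hτh).symm
    change HasDerivAt (fun s => (qh s)⁻¹ • uh s) ((qh t)⁻¹ • uhd + (-⟪uhd, τh t⟫ / qh t ^ 2) • uh t) t at h3
    rw [heq] at h3
    convert h3 using 1
    rw [huht]
    match_scalars
    · field_simp
    · field_simp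
  have hw := hτd.sub hτhd
  have hns : HasDerivAt (fun s => ‖τ s - τh s‖^2)
      (2 * ⟪((q t)⁻¹ • (ud - ⟪ud, τ t⟫ • τ t)) - ((qh t)⁻¹ • (uhd - ⟪uhd, τh t⟫ • τh t)),
        τ t - τh t⟫) t := by
    have h4 := hw.inner ℝ hw
    have heq : (fun s => ⟪τ s - τh s, τ s - τh s⟫) = fun s => ‖τ s - τh s‖^2 := by
      funext s; rw [real_inner_self_eq_norm_sq]
    change HasDerivAt (fun s => ⟪τ s - τh s, τ s - τh s⟫) (⟪τ t - τh t, (q t)⁻¹ • (ud - ⟪ud, τ t⟫ • τ t) - (qh t)⁻¹ • (uhd - ⟪uhd, τh t⟫ • τh t)⟫ + ⟪(q t)⁻¹ • (ud - ⟪ud, τ t⟫ • τ t) - (qh t)⁻¹ • (uhd - ⟪uhd, τh t⟫ • τh t), τ t - τh t⟫) t at h4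
    rw [heq] at h4
    convert h4 using 1
    rw [real_inner_comm]
    ring
  have hmul := hqhd.mul hns
  change HasDerivAt (fun s => qh s * ‖τ s - τh s‖^2) _ t at hmul
  convert hmul using 1
  have ha : ⟪τ t, τ t⟫ = 1 := by
    rw [hτ t, real_inner_smul_left, real_inner_smul_right, real_inner_self_eq_norm_sq,
      ← hq t]
    field_simp
  have hb : ⟪τh t, τh t⟫ = 1 := by
    rw [hτh t, real_inner_smul_left, real_inner_smul_right, real_inner_self_eq_norm_sq,
      ← hqh t]
    field_simp
  have hpt := sbp_pointwise (q t) (qh t) hq0' hqh0' (τ t) (τh t) ud uhd ha hb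
  linarith [hpt]

end SbpAux

/-- the summation-by-parts identity used in the error analysis:
`−h Σ_j [(τ_{j+1}−τ^h_{j+1})−(τ_j−τ^h_j)]/h · ė_j
  = (1/2) h d/dt Σ_j q^h_j |τ_j−τ^h_j|²
    + h Σ_j [ ((q_j−q^h_j)/q_j) δẋ_j·(τ_j−τ^h_j)
              + (1/2)(q^h_j/q_j)(δẋ_j·τ_j)|τ_j−τ^h_j|² ]`. -/
theorem summation_by_parts_identity
    (J : ℕ) (hJ : 2 ≤ J) (T : ℝ) (hT : 0 < T)
    (x xh xd xhd : ℤ → ℝ → E2) (q qh : ℤ → ℝ → ℝ) (τ τh : ℤ → ℝ → E2)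
    (hperx : ∀ j t, x (j + J) t = x j t)
    (hperxh : ∀ j t, xh (j + J) t = xh j t)
    (hq : ∀ j t, q j t = ‖(J:ℝ) • (x j t - x (j-1) t)‖)
    (hqh : ∀ j t, qh j t = ‖(J:ℝ) • (xh j t - xh (j-1) t)‖)
    (hqpos : ∀ j, ∀ t ∈ Icc (0:ℝ) T, 0 < q j t)
    (hqhpos : ∀ j, ∀ t ∈ Icc (0:ℝ) T, 0 < qh j t)
    (hτ : ∀ j t, τ j t = (q j t)⁻¹ • ((J:ℝ) • (x j t - x (j-1) t)))
    (hτh : ∀ j t, τh j t = (qh j t)⁻¹ • ((J:ℝ) • (xh j t - xh (j-1) t)))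
    (hxd : ∀ j t, HasDerivAt (fun t' => x j t') (xd j t) t)
    (hxhd : ∀ j t, HasDerivAt (fun t' => xh j t') (xhd j t) t) :
    ∀ t ∈ Icc (0:ℝ) T,
      HasDerivAt
        (fun s => (1/2) * (1/(J:ℝ)) *
          ∑ j ∈ Finset.Icc (1:ℤ) (J:ℤ), qh j s * ‖τ j s - τh j s‖ ^ 2)
        (-(1/(J:ℝ)) * ∑ j ∈ Finset.Icc (1:ℤ) (J:ℤ),
            ⟪(J:ℝ) • ((τ (j+1) t - τh (j+1) t) - (τ j t - τh j t)),
              xd j t - xhd j t⟫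
          - (1/(J:ℝ)) * ∑ j ∈ Finset.Icc (1:ℤ) (J:ℤ),
            (((q j t - qh j t) / q j t) *
                ⟪(J:ℝ) • (xd j t - xd (j-1) t), τ j t - τh j t⟫
              + (1/2) * (qh j t / q j t) *
                ⟪(J:ℝ) • (xd j t - xd (j-1) t), τ j t⟫ * ‖τ j t - τh j t‖ ^ 2)) t := by
  intro t ht
  have hJne : (J:ℝ) ≠ 0 := by positivity
  -- per-summand derivative
  have hder : ∀ j : ℤ, HasDerivAt (fun s => qh j s * ‖τ j s - τh j s‖ ^ 2)
      (2 * (⟪τ j t - τh j t,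
          (J:ℝ) • (xd j t - xd (j-1) t) - (J:ℝ) • (xhd j t - xhd (j-1) t)⟫ -
        (((q j t - qh j t) / q j t) *
            ⟪(J:ℝ) • (xd j t - xd (j-1) t), τ j t - τh j t⟫
          + (1/2) * (qh j t / q j t) *
            ⟪(J:ℝ) • (xd j t - xd (j-1) t), τ j t⟫ * ‖τ j t - τh j t‖ ^ 2))) t := by
    intro j
    exact sbp_summand_deriv t
      (fun s => (J:ℝ) • (x j s - x (j-1) s)) (fun s => (J:ℝ) • (xh j s - xh (j-1) s))
      ((J:ℝ) • (xd j t - xd (j-1) t)) ((J:ℝ) • (xhd j t - xhd (j-1) t))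
      (((hxd j t).sub (hxd (j-1) t)).const_smul (J:ℝ))
      (((hxhd j t).sub (hxhd (j-1) t)).const_smul (J:ℝ))
      (q j) (qh j) (hq j) (hqh j) (hqpos j t ht) (hqhpos j t ht)
      (τ j) (τh j) (hτ j) (hτh j)
  have hsum := HasDerivAt.sum (u := Finset.Icc (1:ℤ) (J:ℤ)) (fun j _ => hder j)
  have H := hsum.const_mul ((1:ℝ)/2 * (1/(J:ℝ)))
  simp only [Finset.sum_apply] at H
  change HasDerivAt (fun s => (1:ℝ)/2 * (1/(J:ℝ)) *
      ∑ j ∈ Finset.Icc (1:ℤ) (J:ℤ), qh j s * ‖τ j s - τh j s‖ ^ 2)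
    ((1:ℝ)/2 * (1/(J:ℝ)) * ∑ j ∈ Finset.Icc (1:ℤ) (J:ℤ),
      (2:ℝ) * (⟪τ j t - τh j t,
          (J:ℝ) • (xd j t - xd (j-1) t) - (J:ℝ) • (xhd j t - xhd (j-1) t)⟫ -
        (((q j t - qh j t) / q j t) *
            ⟪(J:ℝ) • (xd j t - xd (j-1) t), τ j t - τh j t⟫
          + (1/2) * (qh j t / q j t) *
            ⟪(J:ℝ) • (xd j t - xd (j-1) t), τ j t⟫ * ‖τ j t - τh j t‖ ^ 2))) t at H
  convert H using 1
  -- periodicity facts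
  have hqper : ∀ (j : ℤ) (s : ℝ), q (j + (J:ℤ)) s = q j s := by
    intro j s
    rw [hq, hq]
    have h2 : j + (J:ℤ) - 1 = (j - 1) + (J:ℤ) := by ring
    rw [h2, hperx j s, hperx (j-1) s]
  have hqhper : ∀ (j : ℤ) (s : ℝ), qh (j + (J:ℤ)) s = qh j s := by
    intro j s
    rw [hqh, hqh]
    have h2 : j + (J:ℤ) - 1 = (j - 1) + (J:ℤ) := by ring
    rw [h2, hperxh j s, hperxh (j-1) s]
  have hτper : ∀ (j : ℤ) (s : ℝ), τ (j + (J:ℤ)) s = τ j s := by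
    intro j s
    rw [hτ, hτ, hqper]
    have h2 : j + (J:ℤ) - 1 = (j - 1) + (J:ℤ) := by ring
    rw [h2, hperx j s, hperx (j-1) s]
  have hτhper : ∀ (j : ℤ) (s : ℝ), τh (j + (J:ℤ)) s = τh j s := by
    intro j s
    rw [hτh, hτh, hqhper]
    have h2 : j + (J:ℤ) - 1 = (j - 1) + (J:ℤ) := by ring
    rw [h2, hperxh j s, hperxh (j-1) s]
  have hxdper : ∀ j : ℤ, xd (j + (J:ℤ)) t = xd j t := by
    intro j
    have h := hxd (j + (J:ℤ)) t
    have heq : (fun t' => x (j + (J:ℤ)) t') = fun t' => x j t' :=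
      funext fun s => hperx j s
    rw [heq] at h
    exact h.unique (hxd j t)
  have hxhdper : ∀ j : ℤ, xhd (j + (J:ℤ)) t = xhd j t := by
    intro j
    have h := hxhd (j + (J:ℤ)) t
    have heq : (fun t' => xh (j + (J:ℤ)) t') = fun t' => xh j t' :=
      funext fun s => hperxh j s
    rw [heq] at h
    exact h.unique (hxhd j t)
  -- the shift identity
  have hshift : ∑ j ∈ Finset.Icc (1:ℤ) (J:ℤ),
        ⟪τ (j+1) t - τh (j+1) t, xd j t - xhd j t⟫
      = ∑ j ∈ Finset.Icc (1:ℤ) (J:ℤ),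
        ⟪τ j t - τh j t, xd (j-1) t - xhd (j-1) t⟫ := by
    have hper : (fun j : ℤ => ⟪τ j t - τh j t, xd (j-1) t - xhd (j-1) t⟫) ((J:ℤ)+1)
        = (fun j : ℤ => ⟪τ j t - τh j t, xd (j-1) t - xhd (j-1) t⟫) 1 := by
      simp only
      have e1 : (J:ℤ)+1 = 1 + (J:ℤ) := by ring
      have e2 : (J:ℤ)+1-1 = 0 + (J:ℤ) := by ring
      have e3 : (1:ℤ)-1 = 0 := by ring
      rw [e2, e1, e3, hτper 1 t, hτhper 1 t, hxdper 0, hxhdper 0]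
    have h := sbp_sum_shift_one J
      (fun j : ℤ => ⟪τ j t - τh j t, xd (j-1) t - xhd (j-1) t⟫) hper
    simp only [add_sub_cancel_right] at h
    exact h
  -- pointwise rearrangements
  have e1 : ∀ j ∈ Finset.Icc (1:ℤ) (J:ℤ),
      ⟪(J:ℝ) • ((τ (j+1) t - τh (j+1) t) - (τ j t - τh j t)), xd j t - xhd j t⟫
      = (J:ℝ) * ⟪τ (j+1) t - τh (j+1) t, xd j t - xhd j t⟫
        - (J:ℝ) * ⟪τ j t - τh j t, xd j t - xhd j t⟫ := by
    intro j _
    rw [real_inner_smul_left, inner_sub_left]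
    ring
  have e2 : ∀ j ∈ Finset.Icc (1:ℤ) (J:ℤ),
      (2:ℝ) * (⟪τ j t - τh j t,
          (J:ℝ) • (xd j t - xd (j-1) t) - (J:ℝ) • (xhd j t - xhd (j-1) t)⟫ -
        (((q j t - qh j t) / q j t) *
            ⟪(J:ℝ) • (xd j t - xd (j-1) t), τ j t - τh j t⟫
          + (1/2) * (qh j t / q j t) *
            ⟪(J:ℝ) • (xd j t - xd (j-1) t), τ j t⟫ * ‖τ j t - τh j t‖ ^ 2))
      = 2 * ((J:ℝ) * ⟪τ j t - τh j t, xd j t - xhd j t⟫)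
        - 2 * ((J:ℝ) * ⟪τ j t - τh j t, xd (j-1) t - xhd (j-1) t⟫)
        - 2 * (((q j t - qh j t) / q j t) *
            ⟪(J:ℝ) • (xd j t - xd (j-1) t), τ j t - τh j t⟫
          + (1/2) * (qh j t / q j t) *
            ⟪(J:ℝ) • (xd j t - xd (j-1) t), τ j t⟫ * ‖τ j t - τh j t‖ ^ 2) := by
    intro j _
    simp only [smul_sub, inner_sub_right, real_inner_smul_right]
    ring
  rw [Finset.sum_congr rfl e1, Finset.sum_congr rfl e2]
  simp only [Finset.sum_sub_distrib, ← Finset.mul_sum]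
  rw [hshift]
  field_simp
  ring
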